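/- For all x, y, z, w ∈ E, the determinant of the 4×4 matrix M(x,y,z,w) whose rows are (1,1,1,1), (x,y,z,w), (x⁷,y⁷,z⁷,w⁷), (x⁸,y⁸,z⁸,w⁸) equals (x−y)(x−z)(x−w)(y−z)(y−w)(z−w) · ∏_{i=1}^{5} ( xy + zw + i(xz + wy) + (6−i)(xw + yz) ). -/

import Mathlib

set_option maxHeartbeats 4000000


/-- Lemma 3(1): factorization of the determinant of the 4×4 matrix M(x,y,z,w) over a
finite field with 7^(2m) elements. -/
theorem stmt_2 {m : ℕ} (hm : 2 ≤ m) (q : ℕ) (hq : q = 7 ^ m)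
    {E : Type*} [Field E] [Fintype E] (hE : Fintype.card E = q ^ 2)
    (x y z w : E) :
    Matrix.det !![(1 : E), 1, 1, 1; x, y, z, w; x ^ 7, y ^ 7, z ^ 7, w ^ 7;
        x ^ 8, y ^ 8, z ^ 8, w ^ 8] =
      (x - y) * (x - z) * (x - w) * (y - z) * (y - w) * (z - w) *
        ∏ i ∈ Finset.Icc (1 : ℕ) 5,
          (x * y + z * w + (i : E) * (x * z + w * y) + ((6 : E) - (i : E)) * (x * w + y * z)) := by
  have h7 : (7 : E) = 0 := by
    have hc : ((Fintype.card E : ℕ) : E) = 0 := FiniteField.cast_card_eq_zero E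
    rw [hE, hq, ← pow_mul] at hc
    push_cast at hc
    exact pow_eq_zero_iff (by positivity) |>.mp hc
  simp only [Matrix.det_succ_row_zero, Fin.sum_univ_succ, Fin.sum_univ_zero,
    show Finset.Icc (1 : ℕ) 5 = {1, 2, 3, 4, 5} from rfl, Finset.prod_insert, Finset.mem_insert,
    Finset.mem_singleton, Finset.prod_singleton, Matrix.submatrix_apply, Matrix.cons_val',
    Matrix.cons_val_zero, Matrix.cons_val_one, Matrix.head_cons, Matrix.cons_val_fin_one,
    Matrix.empty_val', Matrix.head_fin_const, Fin.succAbove, Matrix.det_fin_one,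
    Matrix.det_unique]
  norm_num [Fin.lt_def, Matrix.cons_val_succ]
  simp only [show ((2 : Fin 3).castSucc : Fin 4) = 2 from rfl, Matrix.cons_val_two,
    Matrix.tail_cons, Matrix.head_cons, Matrix.vecHead, Matrix.cons_val_zero, Matrix.cons_val_fin_one]
  linear_combination ((-2)*y^2*z^6*w^8 + (2)*y^2*z^8*w^6 + (-10)*y^3*z^5*w^8 + (-13)*y^3*z^6*w^7 + (13)*y^3*z^7*w^6 + (10)*y^3*z^8*w^5 + (-20)*y^4*z^4*w^8 + (-65)*y^4*z^5*w^7 + (65)*y^4*z^7*w^5 + (20)*y^4*z^8*w^4 + (-7)*y^5*z^3*w^8 + (-80)*y^5*z^4*w^7 + (-85)*y^5*z^5*w^6 + (85)*y^5*z^6*w^5 + (80)*y^5*z^7*w^4 + (7)*y^5*z^8*w^3 + (22)*y^6*z^2*w^8 + (65)*y^6*z^3*w^7 + (20)*y^6*z^4*w^6 + (-20)*y^6*z^6*w^4 + (-65)*y^6*z^7*w^3 + (-22)*y^6*z^8*w^2 + (17)*y^7*z*w^8 + (110)*y^7*z^2*w^7 + (182)*y^7*z^3*w^6 + (80)*y^7*z^4*w^5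 + (-80)*y^7*z^5*w^4 + (-182)*y^7*z^6*w^3 + (-110)*y^7*z^7*w^2 + (-17)*y^7*z^8*w + (-17)*y^8*z*w^7 + (-132)*y^8*z^2*w^6 + (-240)*y^8*z^3*w^5 + (240)*y^8*z^5*w^3 + (132)*y^8*z^6*w^2 + (17)*y^8*z^7*w + (-13)*x*y^2*z^5*w^8 + (-5)*x*y^2*z^6*w^7 + (5)*x*y^2*z^7*w^6 + (13)*x*y^2*z^8*w^5 + (-65)*x*y^3*z^4*w^8 + (-92)*x*y^3*z^5*w^7 + (92)*x*y^3*z^7*w^5 + (65)*x*y^3*z^8*w^4 + (-80)*x*y^4*z^3*w^8 + (-255)*x*y^4*z^4*w^7 + (-130)*x*y^4*z^5*w^6 + (130)*x*y^4*z^6*w^5 + (255)*x*y^4*z^7*w^4 + (80)*x*y^4*z^8*w^3 + (65)*x*y^5*z^2*w^8 + (92)*x*y^5*z^3*w^7 + (65)*x*y^5*z^4*w^6 + (-65)*x*y^5*z^6*w^4 + (-92)*x*y^5*z^7*w^3 + (-65)*x*y^5*z^8*w^2 + (110)*x*y^6*z*w^8 + (463)*x*y^6*z^2*w^7 + (660)*x*y^6*z^3*w^6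 + (335)*x*y^6*z^4*w^5 + (-335)*x*y^6*z^5*w^4 + (-660)*x*y^6*z^6*w^3 + (-463)*x*y^6*z^7*w^2 + (-110)*x*y^6*z^8*w + (-17)*x*y^7*w^8 + (-220)*x*y^7*z*w^7 + (-710)*x*y^7*z^2*w^6 + (-752)*x*y^7*z^3*w^5 + (752)*x*y^7*z^5*w^3 + (710)*x*y^7*z^6*w^2 + (220)*x*y^7*z^7*w + (17)*x*y^7*z^8 + (17)*x*y^8*w^7 + (110)*x*y^8*z*w^6 + (182)*x*y^8*z^2*w^5 + (80)*x*y^8*z^3*w^4 + (-80)*x*y^8*z^4*w^3 + (-182)*x*y^8*z^5*w^2 + (-110)*x*y^8*z^6*w + (-17)*x*y^8*z^7 + (2)*x^2*z^6*w^8 + (-2)*x^2*z^8*w^6 + (13)*x^2*y*z^5*w^8 + (5)*x^2*y*z^6*w^7 + (-5)*x^2*y*z^7*w^6 + (-13)*x^2*y*z^8*w^5 + (-85)*x^2*y^3*z^3*w^8 + (-130)*x^2*y^3*z^4*w^7 + (-123)*x^2*y^3*z^5*w^6 + (123)*x^2*y^3*z^6*w^5 + (130)*x^2*y^3*z^7*w^4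 + (85)*x^2*y^3*z^8*w^3 + (20)*x^2*y^4*z^2*w^8 + (65)*x^2*y^4*z^3*w^7 + (20)*x^2*y^4*z^4*w^6 + (-20)*x^2*y^4*z^6*w^4 + (-65)*x^2*y^4*z^7*w^3 + (-20)*x^2*y^4*z^8*w^2 + (182)*x^2*y^5*z*w^8 + (660)*x^2*y^5*z^2*w^7 + (985)*x^2*y^5*z^3*w^6 + (465)*x^2*y^5*z^4*w^5 + (-465)*x^2*y^5*z^5*w^4 + (-985)*x^2*y^5*z^6*w^3 + (-660)*x^2*y^5*z^7*w^2 + (-182)*x^2*y^5*z^8*w + (-132)*x^2*y^6*w^8 + (-710)*x^2*y^6*z*w^7 + (-1360)*x^2*y^6*z^2*w^6 + (-1300)*x^2*y^6*z^3*w^5 + (1300)*x^2*y^6*z^5*w^3 + (1360)*x^2*y^6*z^6*w^2 + (710)*x^2*y^6*z^7*w + (132)*x^2*y^6*z^8 + (110)*x^2*y^7*w^7 + (463)*x^2*y^7*z*w^6 + (660)*x^2*y^7*z^2*w^5 + (335)*x^2*y^7*z^3*w^4 + (-335)*x^2*y^7*z^4*w^3 + (-660)*x^2*y^7*z^5*w^2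 + (-463)*x^2*y^7*z^6*w + (-110)*x^2*y^7*z^7 + (22)*x^2*y^8*w^6 + (65)*x^2*y^8*z*w^5 + (20)*x^2*y^8*z^2*w^4 + (-20)*x^2*y^8*z^4*w^2 + (-65)*x^2*y^8*z^5*w + (-22)*x^2*y^8*z^6 + (10)*x^3*z^5*w^8 + (13)*x^3*z^6*w^7 + (-13)*x^3*z^7*w^6 + (-10)*x^3*z^8*w^5 + (65)*x^3*y*z^4*w^8 + (92)*x^3*y*z^5*w^7 + (-92)*x^3*y*z^7*w^5 + (-65)*x^3*y*z^8*w^4 + (85)*x^3*y^2*z^3*w^8 + (130)*x^3*y^2*z^4*w^7 + (123)*x^3*y^2*z^5*w^6 + (-123)*x^3*y^2*z^6*w^5 + (-130)*x^3*y^2*z^7*w^4 + (-85)*x^3*y^2*z^8*w^3 + (80)*x^3*y^4*z*w^8 + (335)*x^3*y^4*z^2*w^7 + (465)*x^3*y^4*z^3*w^6 + (255)*x^3*y^4*z^4*w^5 + (-255)*x^3*y^4*z^5*w^4 + (-465)*x^3*y^4*z^6*w^3 + (-335)*x^3*y^4*z^7*w^2 + (-80)*x^3*y^4*z^8*w + (-240)*x^3*y^5*w^8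 + (-752)*x^3*y^5*z*w^7 + (-1300)*x^3*y^5*z^2*w^6 + (-1100)*x^3*y^5*z^3*w^5 + (1100)*x^3*y^5*z^5*w^3 + (1300)*x^3*y^5*z^6*w^2 + (752)*x^3*y^5*z^7*w + (240)*x^3*y^5*z^8 + (182)*x^3*y^6*w^7 + (660)*x^3*y^6*z*w^6 + (985)*x^3*y^6*z^2*w^5 + (465)*x^3*y^6*z^3*w^4 + (-465)*x^3*y^6*z^4*w^3 + (-985)*x^3*y^6*z^5*w^2 + (-660)*x^3*y^6*z^6*w + (-182)*x^3*y^6*z^7 + (65)*x^3*y^7*w^6 + (92)*x^3*y^7*z*w^5 + (65)*x^3*y^7*z^2*w^4 + (-65)*x^3*y^7*z^4*w^2 + (-92)*x^3*y^7*z^5*w + (-65)*x^3*y^7*z^6 + (-7)*x^3*y^8*w^5 + (-80)*x^3*y^8*z*w^4 + (-85)*x^3*y^8*z^2*w^3 + (85)*x^3*y^8*z^3*w^2 + (80)*x^3*y^8*z^4*w + (7)*x^3*y^8*z^5 + (20)*x^4*z^4*w^8 + (65)*x^4*z^5*w^7 + (-65)*x^4*z^7*w^5 + (-20)*x^4*z^8*w^4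 + (80)*x^4*y*z^3*w^8 + (255)*x^4*y*z^4*w^7 + (130)*x^4*y*z^5*w^6 + (-130)*x^4*y*z^6*w^5 + (-255)*x^4*y*z^7*w^4 + (-80)*x^4*y*z^8*w^3 + (-20)*x^4*y^2*z^2*w^8 + (-65)*x^4*y^2*z^3*w^7 + (-20)*x^4*y^2*z^4*w^6 + (20)*x^4*y^2*z^6*w^4 + (65)*x^4*y^2*z^7*w^3 + (20)*x^4*y^2*z^8*w^2 + (-80)*x^4*y^3*z*w^8 + (-335)*x^4*y^3*z^2*w^7 + (-465)*x^4*y^3*z^3*w^6 + (-255)*x^4*y^3*z^4*w^5 + (255)*x^4*y^3*z^5*w^4 + (465)*x^4*y^3*z^6*w^3 + (335)*x^4*y^3*z^7*w^2 + (80)*x^4*y^3*z^8*w + (80)*x^4*y^5*w^7 + (335)*x^4*y^5*z*w^6 + (465)*x^4*y^5*z^2*w^5 + (255)*x^4*y^5*z^3*w^4 + (-255)*x^4*y^5*z^4*w^3 + (-465)*x^4*y^5*z^5*w^2 + (-335)*x^4*y^5*z^6*w + (-80)*x^4*y^5*z^7 + (20)*x^4*y^6*w^6 + (65)*x^4*y^6*z*w^5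 + (20)*x^4*y^6*z^2*w^4 + (-20)*x^4*y^6*z^4*w^2 + (-65)*x^4*y^6*z^5*w + (-20)*x^4*y^6*z^6 + (-80)*x^4*y^7*w^5 + (-255)*x^4*y^7*z*w^4 + (-130)*x^4*y^7*z^2*w^3 + (130)*x^4*y^7*z^3*w^2 + (255)*x^4*y^7*z^4*w + (80)*x^4*y^7*z^5 + (-20)*x^4*y^8*w^4 + (-65)*x^4*y^8*z*w^3 + (65)*x^4*y^8*z^3*w + (20)*x^4*y^8*z^4 + (7)*x^5*z^3*w^8 + (80)*x^5*z^4*w^7 + (85)*x^5*z^5*w^6 + (-85)*x^5*z^6*w^5 + (-80)*x^5*z^7*w^4 + (-7)*x^5*z^8*w^3 + (-65)*x^5*y*z^2*w^8 + (-92)*x^5*y*z^3*w^7 + (-65)*x^5*y*z^4*w^6 + (65)*x^5*y*z^6*w^4 + (92)*x^5*y*z^7*w^3 + (65)*x^5*y*z^8*w^2 + (-182)*x^5*y^2*z*w^8 + (-660)*x^5*y^2*z^2*w^7 + (-985)*x^5*y^2*z^3*w^6 + (-465)*x^5*y^2*z^4*w^5 + (465)*x^5*y^2*z^5*w^4 +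 (985)*x^5*y^2*z^6*w^3 + (660)*x^5*y^2*z^7*w^2 + (182)*x^5*y^2*z^8*w + (240)*x^5*y^3*w^8 + (752)*x^5*y^3*z*w^7 + (1300)*x^5*y^3*z^2*w^6 + (1100)*x^5*y^3*z^3*w^5 + (-1100)*x^5*y^3*z^5*w^3 + (-1300)*x^5*y^3*z^6*w^2 + (-752)*x^5*y^3*z^7*w + (-240)*x^5*y^3*z^8 + (-80)*x^5*y^4*w^7 + (-335)*x^5*y^4*z*w^6 + (-465)*x^5*y^4*z^2*w^5 + (-255)*x^5*y^4*z^3*w^4 + (255)*x^5*y^4*z^4*w^3 + (465)*x^5*y^4*z^5*w^2 + (335)*x^5*y^4*z^6*w + (80)*x^5*y^4*z^7 + (-85)*x^5*y^6*w^5 + (-130)*x^5*y^6*z*w^4 + (-123)*x^5*y^6*z^2*w^3 + (123)*x^5*y^6*z^3*w^2 + (130)*x^5*y^6*z^4*w + (85)*x^5*y^6*z^5 + (-65)*x^5*y^7*w^4 + (-92)*x^5*y^7*z*w^3 + (92)*x^5*y^7*z^3*w + (65)*x^5*y^7*z^4 + (-10)*x^5*y^8*w^3 + (-13)*x^5*y^8*z*w^2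 + (13)*x^5*y^8*z^2*w + (10)*x^5*y^8*z^3 + (-22)*x^6*z^2*w^8 + (-65)*x^6*z^3*w^7 + (-20)*x^6*z^4*w^6 + (20)*x^6*z^6*w^4 + (65)*x^6*z^7*w^3 + (22)*x^6*z^8*w^2 + (-110)*x^6*y*z*w^8 + (-463)*x^6*y*z^2*w^7 + (-660)*x^6*y*z^3*w^6 + (-335)*x^6*y*z^4*w^5 + (335)*x^6*y*z^5*w^4 + (660)*x^6*y*z^6*w^3 + (463)*x^6*y*z^7*w^2 + (110)*x^6*y*z^8*w + (132)*x^6*y^2*w^8 + (710)*x^6*y^2*z*w^7 + (1360)*x^6*y^2*z^2*w^6 + (1300)*x^6*y^2*z^3*w^5 + (-1300)*x^6*y^2*z^5*w^3 + (-1360)*x^6*y^2*z^6*w^2 + (-710)*x^6*y^2*z^7*w + (-132)*x^6*y^2*z^8 + (-182)*x^6*y^3*w^7 + (-660)*x^6*y^3*z*w^6 + (-985)*x^6*y^3*z^2*w^5 + (-465)*x^6*y^3*z^3*w^4 + (465)*x^6*y^3*z^4*w^3 + (985)*x^6*y^3*z^5*w^2 + (660)*x^6*y^3*z^6*w + (182)*x^6*y^3*z^7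 + (-20)*x^6*y^4*w^6 + (-65)*x^6*y^4*z*w^5 + (-20)*x^6*y^4*z^2*w^4 + (20)*x^6*y^4*z^4*w^2 + (65)*x^6*y^4*z^5*w + (20)*x^6*y^4*z^6 + (85)*x^6*y^5*w^5 + (130)*x^6*y^5*z*w^4 + (123)*x^6*y^5*z^2*w^3 + (-123)*x^6*y^5*z^3*w^2 + (-130)*x^6*y^5*z^4*w + (-85)*x^6*y^5*z^5 + (-13)*x^6*y^7*w^3 + (-5)*x^6*y^7*z*w^2 + (5)*x^6*y^7*z^2*w + (13)*x^6*y^7*z^3 + (-2)*x^6*y^8*w^2 + (2)*x^6*y^8*z^2 + (-17)*x^7*z*w^8 + (-110)*x^7*z^2*w^7 + (-182)*x^7*z^3*w^6 + (-80)*x^7*z^4*w^5 + (80)*x^7*z^5*w^4 + (182)*x^7*z^6*w^3 + (110)*x^7*z^7*w^2 + (17)*x^7*z^8*w + (17)*x^7*y*w^8 + (220)*x^7*y*z*w^7 + (710)*x^7*y*z^2*w^6 + (752)*x^7*y*z^3*w^5 + (-752)*x^7*y*z^5*w^3 + (-710)*x^7*y*z^6*w^2 + (-220)*x^7*y*z^7*w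 + (-17)*x^7*y*z^8 + (-110)*x^7*y^2*w^7 + (-463)*x^7*y^2*z*w^6 + (-660)*x^7*y^2*z^2*w^5 + (-335)*x^7*y^2*z^3*w^4 + (335)*x^7*y^2*z^4*w^3 + (660)*x^7*y^2*z^5*w^2 + (463)*x^7*y^2*z^6*w + (110)*x^7*y^2*z^7 + (-65)*x^7*y^3*w^6 + (-92)*x^7*y^3*z*w^5 + (-65)*x^7*y^3*z^2*w^4 + (65)*x^7*y^3*z^4*w^2 + (92)*x^7*y^3*z^5*w + (65)*x^7*y^3*z^6 + (80)*x^7*y^4*w^5 + (255)*x^7*y^4*z*w^4 + (130)*x^7*y^4*z^2*w^3 + (-130)*x^7*y^4*z^3*w^2 + (-255)*x^7*y^4*z^4*w + (-80)*x^7*y^4*z^5 + (65)*x^7*y^5*w^4 + (92)*x^7*y^5*z*w^3 + (-92)*x^7*y^5*z^3*w + (-65)*x^7*y^5*z^4 + (13)*x^7*y^6*w^3 + (5)*x^7*y^6*z*w^2 + (-5)*x^7*y^6*z^2*w + (-13)*x^7*y^6*z^3 + (17)*x^8*z*w^7 + (132)*x^8*z^2*w^6 + (240)*x^8*z^3*w^5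 + (-240)*x^8*z^5*w^3 + (-132)*x^8*z^6*w^2 + (-17)*x^8*z^7*w + (-17)*x^8*y*w^7 + (-110)*x^8*y*z*w^6 + (-182)*x^8*y*z^2*w^5 + (-80)*x^8*y*z^3*w^4 + (80)*x^8*y*z^4*w^3 + (182)*x^8*y*z^5*w^2 + (110)*x^8*y*z^6*w + (17)*x^8*y*z^7 + (-22)*x^8*y^2*w^6 + (-65)*x^8*y^2*z*w^5 + (-20)*x^8*y^2*z^2*w^4 + (20)*x^8*y^2*z^4*w^2 + (65)*x^8*y^2*z^5*w + (22)*x^8*y^2*z^6 + (7)*x^8*y^3*w^5 + (80)*x^8*y^3*z*w^4 + (85)*x^8*y^3*z^2*w^3 + (-85)*x^8*y^3*z^3*w^2 + (-80)*x^8*y^3*z^4*w + (-7)*x^8*y^3*z^5 + (20)*x^8*y^4*w^4 + (65)*x^8*y^4*z*w^3 + (-65)*x^8*y^4*z^3*w + (-20)*x^8*y^4*z^4 + (10)*x^8*y^5*w^3 + (13)*x^8*y^5*z*w^2 + (-13)*x^8*y^5*z^2*w + (-10)*x^8*y^5*z^3 + (2)*x^8*y^6*w^2 + (-2)*x^8*y^6*z^2)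 * h7
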